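/- Let T be a monad on K and l : A ↪ K a full subcategory on which T is idempotent (every object of A is a fixed point of T, so A embeds fully into Alg(T) via the canonical algebra structure on fixed points, giving j∘k : A → Alg(T)). If this full subcategory is codense in Alg(T), i.e. Ran_{jk}(jk) ≅ id_{Alg(T)}, then T is generically idempotent: the codensity monad Ran_l l exists and T ≅ Ran_l l as monads. -/

import Mathlib

/-! STATEMENT 17: let `T` be a monad on `K` and `l : A ↪ K` a full subcategory consisting of
fixed points of `T` (so `A` embeds in `Alg(T)` via the canonical algebra structure on fixed
points). If this subcategory is codense in `Alg(T)`, then `T` is generically idempotent: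
the codensity monad `Ran_l l` exists and `T ≅ Ran_l l` as monads. -/

namespace CategoryTheory

open Functor Limits

noncomputable section

universe w w₂ v v₂ u u₂

namespace Codensity

variable {C : Type u} [Category.{v} C] {D : Type u₂} [Category.{v₂} D]
  (F : C ⥤ D) [F.HasRightKanExtension F]

/-- The underlying endofunctor of the codensity monad of `F`: the right Kan
extension of `F` along itself. -/
abbrev T : D ⥤ D := F.rightKanExtension F

/-- The counit of the right Kan extension. -/
abbrev ε : F ⋙ T F ⟶ F := F.rightKanExtensionCounit F

/-- The unit of the codensity monad. -/
def unit : 𝟭 D ⟶ T F :=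
  (T F).liftOfIsRightKanExtension (ε F) (𝟭 D) F.rightUnitor.hom

/-- The multiplication of the codensity monad. -/
def mul : T F ⋙ T F ⟶ T F :=
  (T F).liftOfIsRightKanExtension (ε F) (T F ⋙ T F)
    ((Functor.associator F (T F) (T F)).inv ≫ whiskerRight (ε F) (T F) ≫ ε F)

lemma unit_fac (X : C) : (unit F).app (F.obj X) ≫ (ε F).app X = 𝟙 (F.obj X) := by
  simp [unit]

lemma mul_fac (X : C) :
    (mul F).app (F.obj X) ≫ (ε F).app X
      = (T F).map ((ε F).app X) ≫ (ε F).app X := by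
  have h := (T F).liftOfIsRightKanExtension_fac_app (ε F)
    (T F ⋙ T F) ((Functor.associator F (T F) (T F)).inv ≫ whiskerRight (ε F) (T F) ≫ ε F) X
  simp only [NatTrans.comp_app, Functor.associator_inv_app, whiskerRight_app,
    Functor.comp_obj, Category.id_comp] at h
  simpa [mul] using h

lemma left_unit' : whiskerLeft (T F) (unit F) ≫ mul F = (T F).rightUnitor.hom := by
  apply (T F).hom_ext_of_isRightKanExtension (ε F)
  ext X
  have h := (unit F).naturality ((ε F).app X)
  simp only [Functor.comp_obj, Functor.id_obj, Functor.id_map] at h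
  simp only [NatTrans.comp_app, whiskerLeft_app, Functor.rightUnitor_hom_app,
    Functor.comp_obj, Functor.id_obj, Category.id_comp, Category.assoc]
  rw [mul_fac, ← Category.assoc, ← h, Category.assoc, unit_fac]
  simp

lemma right_unit' : whiskerRight (unit F) (T F) ≫ mul F = (T F).leftUnitor.hom := by
  apply (T F).hom_ext_of_isRightKanExtension (ε F)
  ext X
  simp only [NatTrans.comp_app, whiskerRight_app, whiskerLeft_app, Functor.leftUnitor_hom_app,
    Functor.comp_obj, Functor.id_obj, Category.id_comp, Category.assoc]
  rw [mul_fac, ← Category.assoc, ← Functor.map_comp, unit_fac]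
  simp

lemma assoc' :
    whiskerRight (mul F) (T F) ≫ mul F
      = (Functor.associator _ _ _).hom ≫ whiskerLeft (T F) (mul F) ≫ mul F := by
  apply (T F).hom_ext_of_isRightKanExtension (ε F)
  ext X
  have h := (mul F).naturality ((ε F).app X)
  simp only [Functor.comp_obj, Functor.comp_map] at h
  simp only [NatTrans.comp_app, whiskerRight_app, whiskerLeft_app, Functor.associator_hom_app,
    Functor.comp_obj, Category.id_comp, Category.assoc]
  conv_lhs => rw [mul_fac, ← Category.assoc, ← Functor.map_comp, mul_fac, Functor.map_comp,
    Category.assoc]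
  conv_rhs => rw [mul_fac, ← Category.assoc, ← h, Category.assoc, mul_fac]

end Codensity

/-- The codensity monad of a functor `F`, defined as the right Kan extension of `F`
along itself, with its canonical monad structure. -/
def codensityMonad {C : Type u} [Category.{v} C] {D : Type u₂} [Category.{v₂} D]
    (F : C ⥤ D) [F.HasRightKanExtension F] : Monad D where
  toFunctor := Codensity.T F
  η := Codensity.unit F
  μ := Codensity.mul F
  left_unit X := by
    simpa using NatTrans.congr_app (Codensity.left_unit' F) X
  right_unit X := by
    simpa using NatTrans.congr_app (Codensity.right_unit' F) X
  assoc X := by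
    simpa using NatTrans.congr_app (Codensity.assoc' F) X

end

end CategoryTheory

universe a' a'' k' k''

open CategoryTheory Functor Limits

noncomputable section

/-- A functor `F` is codense if the identity functor, equipped with some counit, is a pointwise
right Kan extension of `F` along itself. -/
def IsCodenseFunctor {C : Type*} [Category C] {D : Type*} [Category D] (F : C ⥤ D) : Prop :=
  ∃ α : F ⋙ 𝟭 D ⟶ F,
    Nonempty ((Functor.RightExtension.mk (𝟭 D) α).IsPointwiseRightKanExtension)

variable {K : Type k'} [Category.{k''} K]

/-- A fixed point of a monad carries a canonical algebra structure, given by the inverse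
of the unit. -/
def fixedPointAlgebra (T : Monad K) (X : K) (h : IsIso (T.η.app X)) : T.Algebra where
  A := X
  a := inv (T.η.app X)
  unit := by simp
  assoc := by
    have hμ : T.μ.app X = inv (T.map (T.η.app X)) :=
      IsIso.eq_inv_of_hom_inv_id (T.right_unit X)
    rw [hμ]
    simp

/-- A full subcategory of fixed points of `T` embeds canonically in the category of
`T`-algebras. -/
def fixedFunctor {A : Type a'} [Category.{a''} A] (T : Monad K) (l : A ⥤ K)
    (hfix : ∀ a : A, IsIso (T.η.app (l.obj a))) : A ⥤ T.Algebra where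
  obj a := fixedPointAlgebra T (l.obj a) (hfix a)
  map {a b} f :=
    { f := l.map f
      h := by
        have := hfix a
        have := hfix b
        have hn := T.η.naturality (l.map f)
        simp only [Functor.id_map] at hn
        dsimp [fixedPointAlgebra]
        rw [IsIso.comp_inv_eq, Category.assoc, hn, ← Category.assoc, IsIso.inv_hom_id,
          Category.id_comp] }
  map_id a := by
    apply Monad.Algebra.Hom.ext
    dsimp [fixedPointAlgebra]
    simp
  map_comp f g := by
    apply Monad.Algebra.Hom.ext
    dsimp [fixedPointAlgebra]
    simp

namespace GenIdemAux

variable {K : Type k'} [Category.{k''} K] {A : Type a'} [Category.{a''} A]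
  (T : Monad K) (l : A ⥤ K) [l.Full] [l.Faithful]
  (hfix : ∀ a : A, IsIso (T.η.app (l.obj a)))

instance : (fixedFunctor T l hfix).Faithful where
  map_injective h := l.map_injective (congrArg Monad.Algebra.Hom.f h)

instance : (fixedFunctor T l hfix).Full where
  map_surjective g := ⟨l.preimage g.f, by
    apply Monad.Algebra.Hom.ext
    dsimp [fixedFunctor]
    exact l.map_preimage g.f⟩

/-- The canonical counit `U ⋙ T ⟶ U` on the forgetful functor, given by structure maps. -/
def epsU : Monad.forget T ⋙ T.toFunctor ⟶ Monad.forget T where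
  app B := B.a
  naturality _ _ g := g.h

/-- The counit `l ⋙ T ⟶ l`, given by inverses of the unit. -/
def cleanCounit : l ⋙ T.toFunctor ⟶ l where
  app a := inv (T.η.app (l.obj a))
  naturality a b f := by
    have := hfix a; have := hfix b
    have h := T.η.naturality (l.map f)
    simp only [Functor.id_map] at h
    dsimp
    rw [IsIso.comp_inv_eq, Category.assoc, h, IsIso.inv_hom_id_assoc]

/-- The structure map of an algebra, as a morphism of algebras from the free algebra. -/
def algMor (B : T.Algebra) : (Monad.free T).obj B.A ⟶ B where
  f := B.a
  h := B.assoc.symm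

variable (α : fixedFunctor T l hfix ⋙ 𝟭 (T.Algebra) ⟶ fixedFunctor T l hfix)

/-- The image of `α` under the forgetful functor. -/
def beta : fixedFunctor T l hfix ⋙ Monad.forget T ⟶ fixedFunctor T l hfix ⋙ Monad.forget T :=
  whiskerRight α (Monad.forget T)

/-- Since the forgetful functor preserves limits, the pointwise right Kan extension
`Ran_F F ≅ 𝟭` is sent to a pointwise right Kan extension `Ran_F (F ⋙ U) ≅ U`. -/
def betaPt (hpt : (Functor.RightExtension.mk (𝟭 _) α).IsPointwiseRightKanExtension) :
    (Functor.RightExtension.mk (Monad.forget T)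
      (beta T l hfix α)).IsPointwiseRightKanExtension := fun B =>
  IsLimit.ofIsoLimit (isLimitOfPreserves (Monad.forget T) (hpt B))
    (Cones.ext (Iso.refl _) (fun g => by
      dsimp [beta]
      simp
      exact (Category.id_comp _).symm))

theorem mainRKE (hpt : (Functor.RightExtension.mk (𝟭 _) α).IsPointwiseRightKanExtension) :
    T.toFunctor.IsRightKanExtension (cleanCounit T l hfix) := by
  haveI : (Monad.forget T).IsRightKanExtension (beta T l hfix α) :=
    (betaPt T l hfix α hpt).isRightKanExtension
  have hiso : IsIso α := hpt.isIso_hom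
  haveI : IsIso (beta T l hfix α) := by
    dsimp [beta]; infer_instance
  -- the lifting construction
  let mkθ : ∀ (G : K ⥤ K) (γ : l ⋙ G ⟶ l), (Monad.forget T ⋙ G ⟶ Monad.forget T) :=
    fun G γ => (Monad.forget T).liftOfIsRightKanExtension (beta T l hfix α)
      (Monad.forget T ⋙ G)
      ((γ : fixedFunctor T l hfix ⋙ (Monad.forget T ⋙ G) ⟶
          fixedFunctor T l hfix ⋙ Monad.forget T) ≫ beta T l hfix α)
  have mkθ_fac : ∀ (G : K ⥤ K) (γ : l ⋙ G ⟶ l),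
      whiskerLeft (fixedFunctor T l hfix) (mkθ G γ) =
        (γ : fixedFunctor T l hfix ⋙ (Monad.forget T ⋙ G) ⟶
          fixedFunctor T l hfix ⋙ Monad.forget T) := by
    intro G γ
    have h := (Monad.forget T).liftOfIsRightKanExtension_fac (beta T l hfix α)
      (Monad.forget T ⋙ G)
      ((γ : fixedFunctor T l hfix ⋙ (Monad.forget T ⋙ G) ⟶
          fixedFunctor T l hfix ⋙ Monad.forget T) ≫ beta T l hfix α)
    exact (cancel_mono (beta T l hfix α)).1 h
  -- the candidate lift G ⟶ T
  let mkδ : ∀ (G : K ⥤ K) (_ : Monad.forget T ⋙ G ⟶ Monad.forget T), (G ⟶ T.toFunctor) :=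
    fun G θ =>
    { app := fun X => G.map (T.η.app X) ≫ θ.app ((Monad.free T).obj X)
      naturality := fun X Y f => by
        have hθ := θ.naturality ((Monad.free T).map f)
        have hη := T.η.naturality f
        simp only [Functor.id_map] at hη
        dsimp at hθ ⊢
        erw [Category.assoc, ← hθ, ← G.map_comp_assoc, ← G.map_comp_assoc, hη]
        rfl }
  have mkδ_fac : ∀ (G : K ⥤ K) (θ : Monad.forget T ⋙ G ⟶ Monad.forget T) (B : T.Algebra),
      (mkδ G θ).app B.A ≫ B.a = θ.app B := by
    intro G θ B
    have hθ := θ.naturality (algMor T B)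
    dsimp [algMor] at hθ
    dsimp [mkδ]
    erw [Category.assoc, ← hθ, ← G.map_comp_assoc, B.unit, G.map_id, Category.id_comp]
  constructor
  refine ⟨IsTerminal.ofUniqueHom (fun G => ?_) (fun G m => ?_)⟩
  · refine CostructuredArrow.homMk (mkδ G.left (mkθ G.left G.hom)) ?_
    ext a
    have h1 := mkδ_fac G.left (mkθ G.left G.hom) ((fixedFunctor T l hfix).obj a)
    have h2 := congr_app (mkθ_fac G.left G.hom) a
    dsimp at h1 h2 ⊢
    exact h1.trans h2
  · -- uniqueness
    apply CostructuredArrow.hom_ext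
    have hw := CostructuredArrow.w m
    -- θ' built from m.left
    let θ' : Monad.forget T ⋙ G.left ⟶ Monad.forget T :=
      { app := fun B => m.left.app B.A ≫ B.a
        naturality := fun B B' g => by
          have hn := m.left.naturality g.f
          dsimp at hn ⊢
          erw [← Category.assoc, hn, Category.assoc, g.h, ← Category.assoc]
          rfl }
    have hθ' : θ' = mkθ G.left G.hom := by
      apply (Monad.forget T).hom_ext_of_isRightKanExtension (beta T l hfix α)
      rw [mkθ_fac]
      ext a
      have := congr_app hw a
      dsimp at this ⊢
      exact congrArg (fun z => z ≫ (beta T l hfix α).app a) this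
    ext X
    have hmul : m.left.app X = G.left.map (T.η.app X) ≫ θ'.app ((Monad.free T).obj X) := by
      have hn := m.left.naturality (T.η.app X)
      dsimp at hn ⊢
      erw [← Category.assoc, hn, Category.assoc, T.right_unit]
      exact (Category.comp_id _).symm
    dsimp [mkδ]
    rw [hmul, hθ']
    rfl

end GenIdemAux

theorem generically_idempotent_of_codense_fixed_subcategory
    {A : Type a'} [Category.{a''} A] (T : Monad K)
    -- `l` is a full subcategory of `K` ...
    (l : A ⥤ K) [l.Full] [l.Faithful]
    -- ... on which `T` is idempotent, i.e. consisting of fixed points of `T`: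
    (hfix : ∀ a : A, IsIso (T.η.app (l.obj a)))
    -- which is codense in the category of `T`-algebras:
    (hcodense : IsCodenseFunctor (fixedFunctor T l hfix)) :
    -- then the codensity monad of `l` exists and `T` is isomorphic to it as a monad:
    ∃ h : l.HasRightKanExtension l, Nonempty (T ≅ @codensityMonad _ _ _ _ l h) := by
  obtain ⟨α, ⟨hpt⟩⟩ := hcodense
  haveI hrk : T.toFunctor.IsRightKanExtension (GenIdemAux.cleanCounit T l hfix) :=
    GenIdemAux.mainRKE T l hfix α hpt
  have hR : l.HasRightKanExtension l :=
    Functor.HasRightKanExtension.mk T.toFunctor (GenIdemAux.cleanCounit T l hfix)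
  refine ⟨hR, ⟨?_⟩⟩
  letI := hR
  let c := GenIdemAux.cleanCounit T l hfix
  let R : K ⥤ K := l.rightKanExtension l
  let cc : l ⋙ R ⟶ l := l.rightKanExtensionCounit l
  let hom : T.toFunctor ⟶ R := R.liftOfIsRightKanExtension cc T.toFunctor c
  let linv : R ⟶ T.toFunctor := T.toFunctor.liftOfIsRightKanExtension c R cc
  have fac_hom : whiskerLeft l hom ≫ cc = c :=
    R.liftOfIsRightKanExtension_fac cc T.toFunctor c
  have fac_inv : whiskerLeft l linv ≫ c = cc :=
    T.toFunctor.liftOfIsRightKanExtension_fac c R cc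
  have fac_hom_app : ∀ a : A, hom.app (l.obj a) ≫ cc.app a = c.app a := fun a => by
    simpa using congr_app fac_hom a
  have fac_inv_app : ∀ a : A, linv.app (l.obj a) ≫ c.app a = cc.app a := fun a => by
    simpa using congr_app fac_inv a
  have hom_inv : hom ≫ linv = 𝟙 _ := by
    apply T.toFunctor.hom_ext_of_isRightKanExtension c
    ext a
    simp only [NatTrans.comp_app, whiskerLeft_app, Category.assoc, whiskerLeft_id',
      Category.id_comp, NatTrans.id_app]
    rw [fac_inv_app, fac_hom_app]
  have inv_hom : linv ≫ hom = 𝟙 _ := by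
    apply R.hom_ext_of_isRightKanExtension cc
    ext a
    simp only [NatTrans.comp_app, whiskerLeft_app, Category.assoc, whiskerLeft_id',
      Category.id_comp, NatTrans.id_app]
    rw [fac_hom_app, fac_inv_app]
  have hη : T.η ≫ hom = Codensity.unit l := by
    apply R.hom_ext_of_isRightKanExtension cc
    ext a
    have := hfix a
    have hu := Codensity.unit_fac l a
    simp only [NatTrans.comp_app, whiskerLeft_app, Category.assoc, Functor.id_obj]
    rw [fac_hom_app]
    have hc : c.app a = inv (T.η.app (l.obj a)) := rfl
    rw [hc, IsIso.hom_inv_id]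
    exact hu.symm
  have hμ : T.μ ≫ hom =
      whiskerRight hom T.toFunctor ≫ whiskerLeft R hom ≫ Codensity.mul l := by
    apply R.hom_ext_of_isRightKanExtension cc
    ext a
    have := hfix a
    have hm := Codensity.mul_fac l a
    have hn := hom.naturality (cc.app a)
    simp only [Functor.comp_obj, Functor.comp_map] at hn
    simp only [NatTrans.comp_app, whiskerLeft_app, whiskerRight_app, Category.assoc,
      Functor.comp_obj]
    rw [fac_hom_app]
    have hmm : (Codensity.mul l).app (l.obj a) ≫ cc.app a
        = R.map (cc.app a) ≫ cc.app a := hm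
    rw [hmm, ← Category.assoc (hom.app (R.obj (l.obj a))), ← hn, Category.assoc,
      fac_hom_app, ← Functor.map_comp_assoc, fac_hom_app]
    have hc : c.app a = inv (T.η.app (l.obj a)) := rfl
    rw [hc, ← cancel_epi (T.map (T.η.app (l.obj a))), ← Functor.map_comp_assoc,
      IsIso.hom_inv_id, CategoryTheory.Functor.map_id, Category.id_comp, ← Category.assoc, T.right_unit,
      Category.id_comp]
  exact MonadIso.mk ⟨hom, linv, hom_inv, inv_hom⟩
    (fun X => by simpa [codensityMonad] using congr_app hη X)
    (fun X => by simpa [codensityMonad] using congr_app hμ X)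

end
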